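/- Let H be a finite graph, B ⊆ V(H), and D ⊆ V(H). Then the number of minimal dominating sets of the bicolored graph H(B \ N[D]) is at most the number of minimal dominating sets of H(B). More precisely, the map sending X ∈ D(H, B \ N[D]) to any minimal dominating set of H(B) contained in D ∪ X is injective. -/
import Mathlib


open Set

variable {V : Type*}

/-- The closed neighborhood of a set of vertices: `N[X]`. -/
def closedNbhd (G : SimpleGraph V) (X : Set V) : Set V :=
  {y | ∃ x ∈ X, y = x ∨ G.Adj x y}

/-- `X` dominates `A` in `G`: `A ⊆ N[X]`. -/
def Dominates (G : SimpleGraph V) (X A : Set V) : Prop :=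
  A ⊆ closedNbhd G X

/-- `X` is an inclusion-wise minimal set dominating `A` in `G`. -/
def MinDom (G : SimpleGraph V) (X A : Set V) : Prop :=
  Dominates G X A ∧ ∀ Y, Y ⊂ X → ¬ Dominates G Y A

/-- `S` is an independent set in `G`. -/
def IndepSet (G : SimpleGraph V) (S : Set V) : Prop :=
  S.Pairwise fun x y => ¬ G.Adj x y

/-- Every vertex of a minimal dominating set has a private neighbor. -/
lemma private_neighbor {G : SimpleGraph V} {X A : Set V} (h : MinDom G X A) {x : V}
    (hx : x ∈ X) :
    ∃ b ∈ A, (b = x ∨ G.Adj x b) ∧ ∀ z ∈ X, z ≠ x → ¬ (b = z ∨ G.Adj z b) := by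
  have hsub : X \ {x} ⊂ X := by
    constructor
    · exact diff_subset
    · intro hX
      exact (hX hx).2 rfl
  have hnd := h.2 _ hsub
  simp only [Dominates, subset_def, not_forall] at hnd
  obtain ⟨b, hbA, hb⟩ := hnd
  obtain ⟨z, hzX, hzb⟩ := h.1 hbA
  have hz : z = x := by
    by_contra hne
    exact hb ⟨z, ⟨hzX, hne⟩, hzb⟩
  subst hz
  refine ⟨b, hbA, hzb, ?_⟩
  intro w hwX hwx hcontra
  exact hb ⟨w, ⟨hwX, hwx⟩, hcontra⟩

lemma key_subset {H : SimpleGraph V} {B D X : Set V}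
    (hX : MinDom H X (B \ closedNbhd H D)) {F : Set V}
    (hFdom : Dominates H F B) (hFsub : F ⊆ D ∪ X) : X ⊆ F := by
  intro x hx
  obtain ⟨b, hbA, hbx, hpriv⟩ := private_neighbor hX hx
  by_contra hxF
  obtain ⟨z, hzF, hzb⟩ := hFdom hbA.1
  rcases hFsub hzF with hzD | hzX
  · exact hbA.2 ⟨z, hzD, hzb⟩
  · have hzx : z ≠ x := fun h => hxF (h ▸ hzF)
    exact hpriv z hzX hzx hzb

lemma X_disj_D {H : SimpleGraph V} {B D X : Set V}
    (hX : MinDom H X (B \ closedNbhd H D)) : X ∩ D = ∅ := by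
  ext x
  simp only [mem_inter_iff, mem_empty_iff_false, iff_false, not_and]
  intro hxX hxD
  obtain ⟨b, hbA, hbx, _⟩ := private_neighbor hX hxX
  exact hbA.2 ⟨x, hxD, hbx⟩

theorem stmt_4 [Fintype V] (H : SimpleGraph V) (B D : Set V)
    (f : Set V → Set V)
    (hf : ∀ X, MinDom H X (B \ closedNbhd H D) → MinDom H (f X) B ∧ f X ⊆ D ∪ X) :
    Set.InjOn f {X | MinDom H X (B \ closedNbhd H D)} ∧
      {X | MinDom H X (B \ closedNbhd H D)}.ncard ≤ {X | MinDom H X B}.ncard := by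
  have hinj : Set.InjOn f {X | MinDom H X (B \ closedNbhd H D)} := by
    intro X hX Y hY heq
    have hfX := hf X hX
    have hfY := hf Y hY
    have h1 : X ⊆ Y := by
      intro x hx
      have hxfY : x ∈ f Y := heq ▸ key_subset hX hfX.1.1 hfX.2 hx
      rcases hfY.2 hxfY with hD | hY'
      · exact absurd (mem_empty_iff_false x |>.mp ((X_disj_D hX) ▸ ⟨hx, hD⟩)) (fun h => h)
      · exact hY'
    have h2 : Y ⊆ X := by
      intro y hy
      have hyfX : y ∈ f X := heq ▸ key_subset hY hfY.1.1 hfY.2 hy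
      rcases hfX.2 hyfX with hD | hX'
      · exact absurd (mem_empty_iff_false y |>.mp ((X_disj_D hY) ▸ ⟨hy, hD⟩)) (fun h => h)
      · exact hX'
    exact subset_antisymm h1 h2
  refine ⟨hinj, ?_⟩
  calc {X | MinDom H X (B \ closedNbhd H D)}.ncard
      = (f '' {X | MinDom H X (B \ closedNbhd H D)}).ncard :=
        (Set.ncard_image_of_injOn hinj).symm
    _ ≤ {X | MinDom H X B}.ncard := by
        apply Set.ncard_le_ncard
        · rintro _ ⟨X, hX, rfl⟩
          exact (hf X hX).1
        · exact Set.toFinite _
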